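/- arXiv:1105.1427 — 3 statements merged into one kernel-verified Lean document; each statement's English description precedes it below -/
import Mathlib

section
/- Let N ≥ 1, let R be a normalized reduced root system in ℝ^N with positive subsystem R₊ and G-invariant multiplicity function k ≥ 0, and let m_k be the associated weighted measure. Then (ℝ^N, m_k) is a space of homogeneous type: there exists a constant C > 0, depending only on N, R₊ and k, such that m_k(B(x, 2r)) ≤ C m_k(B(x, r)) for every x ∈ ℝ^N and every r > 0, where B(x,r) is the closed ball of center x and radius r. -/
open MeasureTheory Metric Set

/-- The weighted measure `m_k` associated to a positive subsystem `R₊` and a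
multiplicity function `k`: `dm_k(x) = ∏_{α ∈ R₊} |⟨α,x⟩|^{2k(α)} dx`. -/
noncomputable def dunklMeasure (N : ℕ) (Rplus : Finset (EuclideanSpace ℝ (Fin N)))
    (k : EuclideanSpace ℝ (Fin N) → ℝ) : Measure (EuclideanSpace ℝ (Fin N)) :=
  volume.withDensity fun x => ∏ α ∈ Rplus, ENNReal.ofReal (|(inner ℝ α x : ℝ)| ^ (2 * k α))

/-- The group `G` generated by the reflections `σ_α(x) = x − ⟨α,x⟩α`, `α ∈ R`. -/
noncomputable def dunklGroup (N : ℕ) (R : Finset (EuclideanSpace ℝ (Fin N))) :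
    Subgroup (EuclideanSpace ℝ (Fin N) ≃ₗᵢ[ℝ] EuclideanSpace ℝ (Fin N)) :=
  Subgroup.closure {g | ∃ α ∈ R, ∀ x, g x = x - (inner ℝ α x : ℝ) • α}

set_option maxHeartbeats 1000000 in
lemma slab_bound (N : ℕ) (hN : 1 ≤ N) (v : EuclideanSpace ℝ (Fin N)) (hv : ‖v‖ = 1)
    (t δ : ℝ) :
    volume {u : EuclideanSpace ℝ (Fin N) | ‖u‖ ≤ 1/2 ∧ |(inner ℝ v u : ℝ) + t| ≤ δ} ≤
      ENNReal.ofReal (2 * δ) := by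
  set i0 : Fin N := ⟨0, hN⟩
  -- orthonormal basis with b i0 = v
  obtain ⟨b, hb⟩ : ∃ b : OrthonormalBasis (Fin N) ℝ (EuclideanSpace ℝ (Fin N)), b i0 = v := by
    have hcard : Module.finrank ℝ (EuclideanSpace ℝ (Fin N)) = Fintype.card (Fin N) := by
      simp [finrank_euclideanSpace_fin]
    have horth : Orthonormal ℝ (({i0} : Set (Fin N)).restrict (fun _ => v)) := by
      constructor
      · intro i; exact hv
      · intro i j hij
        exact absurd (Subtype.ext (by
          have hi := i.2; have hj := j.2
          simp only [Set.mem_singleton_iff] at hi hj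
          rw [hi, hj])) hij
    obtain ⟨b, hb⟩ := horth.exists_orthonormalBasis_extension_of_card_eq hcard
    exact ⟨b, hb i0 rfl⟩
  set T : Set (EuclideanSpace ℝ (Fin N)) := {y | ‖y‖ ≤ 1/2 ∧ |y i0 + t| ≤ δ}
  have hTmeas : MeasurableSet T := by
    have : IsClosed T := by
      apply IsClosed.inter
      · exact isClosed_le continuous_norm continuous_const
      · exact isClosed_le (((EuclideanSpace.proj i0).continuous.add continuous_const).abs)
          continuous_const
    exact this.measurableSet
  have hpre : {u : EuclideanSpace ℝ (Fin N) | ‖u‖ ≤ 1/2 ∧ |(inner ℝ v u : ℝ) + t| ≤ δ}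
      = b.repr ⁻¹' T := by
    ext u
    simp only [Set.mem_setOf_eq, Set.mem_preimage, T]
    rw [b.repr.norm_map, b.repr_apply_apply, hb]
  rw [hpre, (b.measurePreserving_repr).measure_preimage hTmeas.nullMeasurableSet]
  -- now bound volume of T by a box
  set I : Fin N → Set ℝ := fun i => if i = i0 then Icc (-t - δ) (-t + δ) else Icc (-(1/2)) (1/2)
  have hsub : T ⊆ (MeasurableEquiv.toLp 2 (Fin N → ℝ)).symm ⁻¹' (Set.pi Set.univ I) := by
    intro y hy
    intro i _
    have h1 : |y i| ≤ ‖y‖ := by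
      rw [EuclideanSpace.norm_eq]
      have : |y i| = Real.sqrt (|y i| ^ 2) := by rw [Real.sqrt_sq_eq_abs, abs_abs]
      rw [this]
      simp only [Real.norm_eq_abs, abs_abs]
      apply Real.sqrt_le_sqrt
      exact Finset.single_le_sum (f := fun j => |y j| ^ 2) (fun j _ => by positivity)
        (Finset.mem_univ i)
    have hyi : (MeasurableEquiv.toLp 2 (Fin N → ℝ)).symm y i = y i := rfl
    rw [hyi]
    simp only [I]
    split_ifs with h
    · subst h
      have := hy.2
      constructor <;> [linarith [abs_le.mp this]; linarith [(abs_le.mp this).2]]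
    · have := h1.trans hy.1
      have h2 := abs_le.mp this
      exact ⟨by linarith [h2.1], h2.2⟩
  calc volume T ≤ volume ((MeasurableEquiv.toLp 2 (Fin N → ℝ)).symm ⁻¹' (Set.pi Set.univ I)) :=
        measure_mono hsub
    _ = volume (Set.pi Set.univ I) :=
        (EuclideanSpace.volume_preserving_symm_measurableEquiv_toLp (Fin N)).measure_preimage
          (MeasurableSet.univ_pi (fun i : Fin N => by
            simp only [I]; split_ifs <;> exact measurableSet_Icc)).nullMeasurableSet
    _ ≤ ENNReal.ofReal (2 * δ) := by
        rw [volume_pi_pi]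
        have : ∀ i : Fin N, volume (I i) = if i = i0 then ENNReal.ofReal (2 * δ) else 1 := by
          intro i
          simp only [I]
          split_ifs
          · rw [Real.volume_Icc]; ring_nf
          · rw [Real.volume_Icc]; norm_num
        simp_rw [this]
        rw [Finset.prod_ite_eq' Finset.univ i0 (fun _ => ENNReal.ofReal (2*δ))]
        simp

set_option maxHeartbeats 1000000 in
lemma good_point (N : ℕ) (hN : 1 ≤ N) (S : Finset (EuclideanSpace ℝ (Fin N)))
    (hS : ∀ α ∈ S, ‖α‖ = Real.sqrt 2) :
    ∃ δ : ℝ, 0 < δ ∧ δ ≤ 1 ∧ ∀ (c : EuclideanSpace ℝ (Fin N)) (r : ℝ), 0 < r →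
      ∃ x', ‖x' - c‖ ≤ r/2 ∧ ∀ α ∈ S, δ * r ≤ |(inner ℝ α x' : ℝ)| := by
  have s2pos : (0:ℝ) < Real.sqrt 2 := by positivity
  set V := volume (closedBall (0 : EuclideanSpace ℝ (Fin N)) (1/2)) with hV
  have hVpos : 0 < V := by
    apply lt_of_lt_of_le (measure_ball_pos volume (0 : EuclideanSpace ℝ (Fin N)) (by norm_num : (0:ℝ) < 1/2))
    exact measure_mono ball_subset_closedBall
  have hVfin : V ≠ ⊤ := measure_closedBall_lt_top.ne
  have hVt : 0 < V.toReal := ENNReal.toReal_pos hVpos.ne' hVfin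
  have hden : (0:ℝ) < 2 * Real.sqrt 2 * ((S.card : ℝ) + 1) := by
    have h1 : (0:ℝ) ≤ (S.card : ℝ) := Nat.cast_nonneg _
    nlinarith
  set δ : ℝ := min 1 (V.toReal / (2 * Real.sqrt 2 * (S.card + 1))) with hδ
  have hδpos : 0 < δ := lt_min one_pos (div_pos hVt hden)
  refine ⟨δ, hδpos, min_le_left _ _, ?_⟩
  intro c r hr
  -- bad sets
  set bad : EuclideanSpace ℝ (Fin N) → Set (EuclideanSpace ℝ (Fin N)) :=
    fun α => {u | ‖u‖ ≤ 1/2 ∧ |(inner ℝ α u : ℝ) + (inner ℝ α c : ℝ)/r| ≤ δ} with hbad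
  have hbadvol : ∀ α ∈ S, volume (bad α) ≤ ENNReal.ofReal (Real.sqrt 2 * δ) := by
    intro α hα
    set v : EuclideanSpace ℝ (Fin N) := (Real.sqrt 2)⁻¹ • α with hv
    have hvnorm : ‖v‖ = 1 := by
      rw [hv, norm_smul, hS α hα, Real.norm_eq_abs, abs_of_pos (by positivity)]
      field_simp
    have hsub : bad α ⊆ {u : EuclideanSpace ℝ (Fin N) |
        ‖u‖ ≤ 1/2 ∧ |(inner ℝ v u : ℝ) + ((inner ℝ α c : ℝ)/r)/Real.sqrt 2| ≤ δ/Real.sqrt 2} := by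
      intro u hu
      refine ⟨hu.1, ?_⟩
      have h1 : (inner ℝ v u : ℝ) = (Real.sqrt 2)⁻¹ * (inner ℝ α u : ℝ) := real_inner_smul_left _ _ _
      have h2 : (inner ℝ v u : ℝ) + ((inner ℝ α c : ℝ)/r)/Real.sqrt 2
          = ((inner ℝ α u : ℝ) + (inner ℝ α c : ℝ)/r) / Real.sqrt 2 := by
        rw [h1, inv_mul_eq_div, ← add_div]
      rw [h2, abs_div, abs_of_pos s2pos]
      gcongr
      exact hu.2
    calc volume (bad α) ≤ _ := measure_mono hsub
      _ ≤ ENNReal.ofReal (2 * (δ / Real.sqrt 2)) := slab_bound N hN v hvnorm _ _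
      _ = ENNReal.ofReal (Real.sqrt 2 * δ) := by
          congr 1
          have h22 : Real.sqrt 2 * Real.sqrt 2 = 2 := Real.mul_self_sqrt (by norm_num)
          field_simp
          linear_combination (-1) * h22
  have hunion : volume (⋃ α ∈ S, bad α) < V := by
    have hkey : (S.card : ℝ) * (Real.sqrt 2 * δ) ≤ V.toReal / 2 := by
      have hδle : δ ≤ V.toReal / (2 * Real.sqrt 2 * (S.card + 1)) := min_le_right _ _
      have hδle' : δ * (2 * Real.sqrt 2 * ((S.card : ℝ) + 1)) ≤ V.toReal := by
        rw [← le_div_iff₀ hden]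
        exact hδle
      nlinarith [hδpos.le, s2pos.le, Nat.cast_nonneg (α := ℝ) S.card]
    calc volume (⋃ α ∈ S, bad α) ≤ ∑ α ∈ S, volume (bad α) :=
          measure_biUnion_finset_le S bad
      _ ≤ ∑ _α ∈ S, ENNReal.ofReal (Real.sqrt 2 * δ) := Finset.sum_le_sum hbadvol
      _ = (S.card : ENNReal) * ENNReal.ofReal (Real.sqrt 2 * δ) := by
          rw [Finset.sum_const, nsmul_eq_mul]
      _ = ENNReal.ofReal ((S.card : ℝ) * (Real.sqrt 2 * δ)) := by
          rw [← ENNReal.ofReal_natCast S.card, ← ENNReal.ofReal_mul (Nat.cast_nonneg _)]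
      _ ≤ ENNReal.ofReal (V.toReal / 2) := ENNReal.ofReal_le_ofReal hkey
      _ < V := by
          conv_rhs => rw [← ENNReal.ofReal_toReal hVfin]
          exact ENNReal.ofReal_lt_ofReal_iff hVt |>.mpr (by linarith)
  have hns : ¬ (closedBall (0 : EuclideanSpace ℝ (Fin N)) (1/2) ⊆ ⋃ α ∈ S, bad α) := by
    intro h
    exact absurd (measure_mono h) (not_le.mpr hunion)
  obtain ⟨u, hu1, hu2⟩ := not_subset.mp hns
  have hunorm : ‖u‖ ≤ 1/2 := by rwa [mem_closedBall_zero_iff] at hu1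
  refine ⟨c + r • u, ?_, ?_⟩
  · rw [add_sub_cancel_left, norm_smul, Real.norm_eq_abs, abs_of_pos hr]
    calc r * ‖u‖ ≤ r * (1/2) := by
          exact mul_le_mul_of_nonneg_left hunorm hr.le
      _ = r / 2 := by ring
  · intro α hα
    have hubad : u ∉ bad α := fun h => hu2 (Set.mem_biUnion hα h)
    have hgt : δ < |(inner ℝ α u : ℝ) + (inner ℝ α c : ℝ)/r| := by
      by_contra h
      exact hubad ⟨hunorm, not_lt.mp h⟩
    have hinner : (inner ℝ α (c + r • u) : ℝ)
        = r * ((inner ℝ α u : ℝ) + (inner ℝ α c : ℝ)/r) := by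
      rw [inner_add_right, real_inner_smul_right]
      field_simp
      ring
    rw [hinner, abs_mul, abs_of_pos hr, mul_comm δ r]
    exact mul_le_mul_of_nonneg_left hgt.le hr.le

set_option maxHeartbeats 1000000 in
/-- `(ℝ^N, m_k)` is a space of homogeneous type: the measure `m_k` is doubling
on closed balls. -/
theorem dunklMeasure_doubling
    (N : ℕ) (hN : 1 ≤ N)
    (R Rplus : Finset (EuclideanSpace ℝ (Fin N)))
    (k : EuclideanSpace ℝ (Fin N) → ℝ)
    -- `R` is a normalized reduced root system:
    (hR0 : (0 : EuclideanSpace ℝ (Fin N)) ∉ R)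
    (hRnorm : ∀ α ∈ R, (inner ℝ α α : ℝ) = 2)
    (hRrefl : ∀ α ∈ R, ∀ β ∈ R, β - (inner ℝ α β : ℝ) • α ∈ R)
    -- `R₊` is a positive subsystem: `R` is the disjoint union of `R₊` and `−R₊`:
    (hRplus : ∀ α : EuclideanSpace ℝ (Fin N), α ∈ R ↔ (α ∈ Rplus ∨ -α ∈ Rplus))
    (hRplusDisj : ∀ α ∈ Rplus, -α ∉ Rplus)
    -- `k` is a nonnegative `G`-invariant multiplicity function:
    (hk : ∀ α ∈ R, 0 ≤ k α)
    (hkG : ∀ g ∈ dunklGroup N R, ∀ α ∈ R,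
      k ((g : EuclideanSpace ℝ (Fin N) ≃ₗᵢ[ℝ] EuclideanSpace ℝ (Fin N)) α) = k α) :
    ∃ C : ℝ, 0 < C ∧ ∀ (x : EuclideanSpace ℝ (Fin N)) (r : ℝ), 0 < r →
      dunklMeasure N Rplus k (closedBall x (2 * r)) ≤
        ENNReal.ofReal C * dunklMeasure N Rplus k (closedBall x r) := by
  set s2 : ℝ := Real.sqrt 2 with hs2def
  have s2pos : (0:ℝ) < s2 := by positivity
  have hs22 : s2 * s2 = 2 := Real.mul_self_sqrt (by norm_num)
  have hs21 : (1:ℝ) ≤ s2 := by nlinarith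
  -- norms of positive roots
  have hRplusR : ∀ α ∈ Rplus, α ∈ R := fun α hα => (hRplus α).mpr (Or.inl hα)
  have hnorm : ∀ α ∈ Rplus, ‖α‖ = s2 := by
    intro α hα
    have h2 : (inner ℝ α α : ℝ) = 2 := hRnorm α (hRplusR α hα)
    rw [real_inner_self_eq_norm_sq] at h2
    rw [hs2def, ← Real.sqrt_sq (norm_nonneg α), h2]
  have hkpos : ∀ α ∈ Rplus, 0 ≤ 2 * k α := fun α hα => by
    have := hk α (hRplusR α hα); linarith
  obtain ⟨δ, hδ0, hδ1, hgood⟩ := good_point N hN Rplus hnorm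
  set c : ℝ := δ / (8 * s2) with hcdef
  have hc0 : 0 < c := by positivity
  have hc14 : c ≤ 1/4 := by
    rw [hcdef, div_le_div_iff₀ (by positivity) (by norm_num)]
    nlinarith
  set C : ℝ := (∏ α ∈ Rplus, (1/c) ^ (2 * k α)) * (4 * s2 / δ) ^ N with hCdef
  have hC0 : 0 < C := by
    apply mul_pos
    · exact Finset.prod_pos fun α hα => Real.rpow_pos_of_pos (by positivity) _
    · exact pow_pos (by positivity) N
  refine ⟨C, hC0, ?_⟩
  intro x r hr
  set f : EuclideanSpace ℝ (Fin N) → ENNReal := fun y => ∏ α ∈ Rplus, ENNReal.ofReal (|(inner ℝ α y : ℝ)| ^ (2 * k α))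
    with hfdef
  have hfm : Measurable f := by
    apply Finset.measurable_prod
    intro α _
    apply ENNReal.measurable_ofReal.comp
    exact ((continuous_const.inner continuous_id).abs.measurable).pow measurable_const
  -- inner product estimate
  have hest : ∀ α ∈ Rplus, ∀ y z : EuclideanSpace ℝ (Fin N), |(inner ℝ α y : ℝ)| ≤ |(inner ℝ α z : ℝ)| + s2 * ‖y - z‖ := by
    intro α hα y z
    have h1 : (inner ℝ α y : ℝ) = (inner ℝ α z : ℝ) + (inner ℝ α (y - z) : ℝ) := by
      rw [inner_sub_right]; ring
    calc |(inner ℝ α y : ℝ)| ≤ |(inner ℝ α z : ℝ)| + |(inner ℝ α (y - z) : ℝ)| := by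
          rw [h1]; exact abs_add_le _ _
      _ ≤ |(inner ℝ α z : ℝ)| + s2 * ‖y - z‖ := by
          have := abs_real_inner_le_norm α (y - z)
          rw [hnorm α hα] at this
          linarith
  set T : EuclideanSpace ℝ (Fin N) → ℝ := fun α => |(inner ℝ α x : ℝ)| + 2 * s2 * r with hTdef
  have hT0 : ∀ α, 0 < T α := fun α => by
    have : 0 ≤ |(inner ℝ α x : ℝ)| := abs_nonneg _
    simp only [hTdef]; nlinarith
  set P : ENNReal := ∏ α ∈ Rplus, ENNReal.ofReal (T α ^ (2 * k α)) with hPdef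
  set V1 : ENNReal := volume (closedBall (0 : EuclideanSpace ℝ (Fin N)) 1) with hV1def
  have hfr : Module.finrank ℝ (EuclideanSpace ℝ (Fin N)) = N := finrank_euclideanSpace_fin
  -- upper bound on the big ball
  have hup : dunklMeasure N Rplus k (closedBall x (2*r)) ≤
      P * (ENNReal.ofReal ((2*r)^N) * V1) := by
    rw [dunklMeasure, withDensity_apply _ measurableSet_closedBall]
    have hvol : volume (closedBall x (2*r)) = ENNReal.ofReal ((2*r)^N) * V1 := by
      rw [Measure.addHaar_closedBall' volume x (by linarith), hfr]
    calc ∫⁻ y in closedBall x (2*r),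
          ∏ α ∈ Rplus, ENNReal.ofReal (|(inner ℝ α y : ℝ)| ^ (2 * k α))
        ≤ ∫⁻ _y in closedBall x (2*r), P := by
          apply setLIntegral_mono measurable_const
          intro y hy
          apply Finset.prod_le_prod'
          intro α hα
          apply ENNReal.ofReal_le_ofReal
          apply Real.rpow_le_rpow (abs_nonneg _) _ (hkpos α hα)
          have h1 := hest α hα y x
          have h2 : ‖y - x‖ ≤ 2*r := by
            rw [← dist_eq_norm]; exact mem_closedBall.mp hy
          simp only [hTdef]
          nlinarith
      _ = P * volume (closedBall x (2*r)) := setLIntegral_const _ _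
      _ = P * (ENNReal.ofReal ((2*r)^N) * V1) := by rw [hvol]
  -- the good point and the small ball
  obtain ⟨x', hx'1, hx'2⟩ := hgood x r hr
  set ρ : ℝ := δ * r / (2 * s2) with hρdef
  have hρ0 : 0 < ρ := by positivity
  have hρr : ρ ≤ r / 2 := by
    rw [hρdef, div_le_div_iff₀ (by positivity) (by norm_num)]
    nlinarith
  have hBsub : closedBall x' ρ ⊆ closedBall x r := by
    apply closedBall_subset_closedBall'
    rw [dist_eq_norm]
    linarith
  -- pointwise lower bound on the small ball
  have hlow : ∀ y ∈ closedBall x' ρ, ∀ α ∈ Rplus, c * T α ≤ |(inner ℝ α y : ℝ)| := by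
    intro y hy α hα
    have hyx' : ‖y - x'‖ ≤ ρ := by rw [← dist_eq_norm]; exact mem_closedBall.mp hy
    have hyx : ‖y - x‖ ≤ r := by
      rw [← dist_eq_norm]; exact mem_closedBall.mp (hBsub hy)
    have h1 : δ * r - s2 * ρ ≤ |(inner ℝ α y : ℝ)| := by
      have := hest α hα x' y
      have h3 := hx'2 α hα
      have h4 : ‖x' - y‖ = ‖y - x'‖ := norm_sub_rev _ _
      nlinarith [hest α hα x' y, mul_le_mul_of_nonneg_left hyx' s2pos.le]
    have h1' : δ * r / 2 ≤ |(inner ℝ α y : ℝ)| := by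
      have : s2 * ρ = δ * r / 2 := by
        rw [hρdef]; field_simp
      linarith
    have h2 : |(inner ℝ α x : ℝ)| - s2 * r ≤ |(inner ℝ α y : ℝ)| := by
      have h5 := hest α hα x y
      have h4 : ‖x - y‖ = ‖y - x‖ := norm_sub_rev _ _
      nlinarith [mul_le_mul_of_nonneg_left hyx s2pos.le]
    rcases le_or_gt (|(inner ℝ α x : ℝ)|) (2 * s2 * r) with hcase | hcase
    · have hc4 : c * (4 * s2 * r) = δ * r / 2 := by
        rw [hcdef]; field_simp; ring
      have : c * T α ≤ c * (4 * s2 * r) := by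
        apply mul_le_mul_of_nonneg_left _ hc0.le
        simp only [hTdef]; linarith
      linarith
    · have hA : 0 ≤ |(inner ℝ α x : ℝ)| := abs_nonneg _
      have key : c * T α ≤ |(inner ℝ α x : ℝ)| / 2 := by
        have hTle : T α ≤ 2 * |(inner ℝ α x : ℝ)| := by
          simp only [hTdef]; linarith
        calc c * T α ≤ (1/4) * T α := by
              apply mul_le_mul_of_nonneg_right hc14 (hT0 α).le
          _ ≤ (1/4) * (2 * |(inner ℝ α x : ℝ)|) := by linarith [hTle]
          _ = |(inner ℝ α x : ℝ)| / 2 := by ring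
      have h6 : s2 * r ≤ |(inner ℝ α x : ℝ)| / 2 := by linarith
      calc c * T α ≤ |(inner ℝ α x : ℝ)| / 2 := key
        _ ≤ |(inner ℝ α y : ℝ)| := by linarith
  -- lower bound on the small ball measure
  set D : ENNReal := ∏ α ∈ Rplus, ENNReal.ofReal ((c * T α) ^ (2 * k α)) with hDdef
  have hdown : D * (ENNReal.ofReal (ρ^N) * V1) ≤ dunklMeasure N Rplus k (closedBall x r) := by
    have hvol : volume (closedBall x' ρ) = ENNReal.ofReal (ρ^N) * V1 := by
      rw [Measure.addHaar_closedBall' volume x' hρ0.le, hfr]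
    rw [dunklMeasure, withDensity_apply _ measurableSet_closedBall]
    calc D * (ENNReal.ofReal (ρ^N) * V1) = D * volume (closedBall x' ρ) := by rw [hvol]
      _ = ∫⁻ _y in closedBall x' ρ, D := (setLIntegral_const _ _).symm
      _ ≤ ∫⁻ y in closedBall x' ρ, f y := by
          apply setLIntegral_mono hfm
          intro y hy
          apply Finset.prod_le_prod'
          intro α hα
          apply ENNReal.ofReal_le_ofReal
          exact Real.rpow_le_rpow (by positivity) (hlow y hy α hα) (hkpos α hα)
      _ ≤ ∫⁻ y in closedBall x r, f y := by
          apply lintegral_mono_set hBsub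
  -- algebraic identities
  have hDsplit : D = (∏ α ∈ Rplus, ENNReal.ofReal (c ^ (2 * k α))) * P := by
    rw [hDdef, hPdef, ← Finset.prod_mul_distrib]
    apply Finset.prod_congr rfl
    intro α hα
    rw [Real.mul_rpow hc0.le (hT0 α).le, ENNReal.ofReal_mul (by positivity)]
  have hQ : ENNReal.ofReal C * (∏ α ∈ Rplus, ENNReal.ofReal (c ^ (2 * k α)))
      * ENNReal.ofReal (ρ^N) = ENNReal.ofReal ((2*r)^N) := by
    have hq1 : ∏ α ∈ Rplus, ENNReal.ofReal (c ^ (2 * k α))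
        = ENNReal.ofReal (∏ α ∈ Rplus, c ^ (2 * k α)) := by
      rw [ENNReal.ofReal_prod_of_nonneg]
      intro α hα; positivity
    rw [hq1, ← ENNReal.ofReal_mul hC0.le, ← ENNReal.ofReal_mul (by positivity)]
    congr 1
    have hprod : (∏ α ∈ Rplus, (1/c) ^ (2 * k α)) * (∏ α ∈ Rplus, c ^ (2 * k α)) = 1 := by
      rw [← Finset.prod_mul_distrib]
      apply Finset.prod_eq_one
      intro α hα
      rw [← Real.mul_rpow (by positivity) hc0.le, one_div, inv_mul_cancel₀ hc0.ne',
        Real.one_rpow]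
    have hpow : (4 * s2 / δ) ^ N * ρ ^ N = (2*r) ^ N := by
      rw [← mul_pow]
      congr 1
      rw [hρdef]; field_simp; ring
    calc C * (∏ α ∈ Rplus, c ^ (2 * k α)) * ρ^N
        = ((∏ α ∈ Rplus, (1/c) ^ (2 * k α)) * (∏ α ∈ Rplus, c ^ (2 * k α)))
            * ((4 * s2 / δ) ^ N * ρ ^ N) := by rw [hCdef]; ring
      _ = (2*r)^N := by rw [hprod, hpow, one_mul]
  -- conclude
  calc dunklMeasure N Rplus k (closedBall x (2*r))
      ≤ P * (ENNReal.ofReal ((2*r)^N) * V1) := hup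
    _ = ENNReal.ofReal C * (D * (ENNReal.ofReal (ρ^N) * V1)) := by
        rw [hDsplit, ← hQ]; ring
    _ ≤ ENNReal.ofReal C * dunklMeasure N Rplus k (closedBall x r) := by
        exact mul_le_mul_right hdown _
end

section
/- Let N ≥ 1, let G be a finite subgroup of the orthogonal group O(N) acting on ℝ^N, let x, y ∈ ℝ^N, and let η belong to the convex hull of the orbit G·x = {g·x : g ∈ G}. Then ‖x‖² + ‖y‖² − 2⟨y,η⟩ = ‖y−η‖² + ‖x‖² − ‖η‖² ≥ 0, and with A(x,y,η) := √(‖x‖² + ‖y‖² − 2⟨y,η⟩) one has min_{g∈G} ‖g·x − y‖ ≤ A(x,y,η) ≤ max_{g∈G} ‖g·x − y‖. -/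
open Set

/-- for `η` in the convex hull of the orbit `G·x` of a finite subgroup `G` of
the orthogonal group, the quantity `‖x‖² + ‖y‖² − 2⟨y,η⟩ = ‖y−η‖² + ‖x‖² − ‖η‖²` is
nonnegative, and `A(x,y,η) = √(‖x‖² + ‖y‖² − 2⟨y,η⟩)` lies between
`min_{g∈G} ‖g·x − y‖` and `max_{g∈G} ‖g·x − y‖`. -/
theorem A_between_min_and_max_orbit_dist
    (N : ℕ) (hN : 1 ≤ N)
    (G : Subgroup (EuclideanSpace ℝ (Fin N) ≃ₗᵢ[ℝ] EuclideanSpace ℝ (Fin N)))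
    (hGfin : Finite G)
    (x y η : EuclideanSpace ℝ (Fin N))
    (hη : η ∈ convexHull ℝ
      ((fun g : G => (g : EuclideanSpace ℝ (Fin N) ≃ₗᵢ[ℝ] EuclideanSpace ℝ (Fin N)) x) ''
        univ)) :
    (‖x‖ ^ 2 + ‖y‖ ^ 2 - 2 * (inner ℝ y η : ℝ) = ‖y - η‖ ^ 2 + ‖x‖ ^ 2 - ‖η‖ ^ 2) ∧
    (0 ≤ ‖x‖ ^ 2 + ‖y‖ ^ 2 - 2 * (inner ℝ y η : ℝ)) ∧
    ((⨅ g : G, ‖(g : EuclideanSpace ℝ (Fin N) ≃ₗᵢ[ℝ] EuclideanSpace ℝ (Fin N)) x - y‖) ≤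
        Real.sqrt (‖x‖ ^ 2 + ‖y‖ ^ 2 - 2 * (inner ℝ y η : ℝ))) ∧
    (Real.sqrt (‖x‖ ^ 2 + ‖y‖ ^ 2 - 2 * (inner ℝ y η : ℝ)) ≤
      ⨆ g : G, ‖(g : EuclideanSpace ℝ (Fin N) ≃ₗᵢ[ℝ] EuclideanSpace ℝ (Fin N)) x - y‖) := by
  set f : G → EuclideanSpace ℝ (Fin N) := fun g => (g : EuclideanSpace ℝ (Fin N) ≃ₗᵢ[ℝ] EuclideanSpace ℝ (Fin N)) x with hf
  set Q : ℝ := ‖x‖ ^ 2 + ‖y‖ ^ 2 - 2 * (inner ℝ y η : ℝ) with hQ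
  have hne : Nonempty G := ⟨1⟩
  -- norm preserved
  have hnorm : ∀ g : G, ‖f g‖ = ‖x‖ := fun g => (g : EuclideanSpace ℝ (Fin N) ≃ₗᵢ[ℝ] EuclideanSpace ℝ (Fin N)).norm_map x
  -- key: ‖f g - y‖² = ‖x‖² + ‖y‖² - 2⟨y, f g⟩
  have hsq : ∀ g : G, ‖f g - y‖ ^ 2 = ‖x‖ ^ 2 + ‖y‖ ^ 2 - 2 * (inner ℝ y (f g) : ℝ) := by
    intro g
    have := @norm_sub_sq_real (EuclideanSpace ℝ (Fin N)) _ _ (f g) y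
    rw [this, hnorm g, real_inner_comm]
    ring
  -- linearity of inner y ·
  have hlin : IsLinearMap ℝ (fun z : EuclideanSpace ℝ (Fin N) => (inner ℝ y z : ℝ)) :=
    ⟨fun a b => inner_add_right y a b, fun c a => real_inner_smul_right y a c⟩
  -- max and min of inner over orbit
  obtain ⟨gM, hgM⟩ := Finite.exists_max (fun g : G => (inner ℝ y (f g) : ℝ))
  obtain ⟨gm, hgm⟩ := Finite.exists_min (fun g : G => (inner ℝ y (f g) : ℝ))
  have hle : (inner ℝ y η : ℝ) ≤ inner ℝ y (f gM) := by
    have hsub : convexHull ℝ (f '' univ) ⊆ {z : EuclideanSpace ℝ (Fin N) | (inner ℝ y z : ℝ) ≤ inner ℝ y (f gM)} := by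
      apply convexHull_min
      · rintro z ⟨g, -, rfl⟩; exact hgM g
      · exact convex_halfSpace_le hlin _
    exact hsub hη
  have hge : (inner ℝ y (f gm) : ℝ) ≤ inner ℝ y η := by
    have hsub : convexHull ℝ (f '' univ) ⊆ {z : EuclideanSpace ℝ (Fin N) | inner ℝ y (f gm) ≤ (inner ℝ y z : ℝ)} := by
      apply convexHull_min
      · rintro z ⟨g, -, rfl⟩; exact hgm g
      · exact convex_halfSpace_ge hlin _
    exact hsub hη
  have hQge : ‖f gM - y‖ ^ 2 ≤ Q := by rw [hsq gM, hQ]; linarith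
  have hQle : Q ≤ ‖f gm - y‖ ^ 2 := by rw [hsq gm, hQ]; linarith
  have hQ0 : 0 ≤ Q := le_trans (sq_nonneg _) hQge
  refine ⟨?_, hQ0, ?_, ?_⟩
  · have := @norm_sub_sq_real (EuclideanSpace ℝ (Fin N)) _ _ y η; rw [this]; ring
  · -- iInf ≤ sqrt Q
    have h1 : ‖f gM - y‖ ≤ Real.sqrt Q := by
      rw [show ‖f gM - y‖ = Real.sqrt (‖f gM - y‖ ^ 2) by
        rw [Real.sqrt_sq (norm_nonneg _)]]
      exact Real.sqrt_le_sqrt hQge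
    refine le_trans (ciInf_le ?_ gM) ?_
    · exact ⟨0, fun r ⟨g, hg⟩ => hg ▸ norm_nonneg _⟩
    · have : ‖f gM - y‖ = ‖(gM : EuclideanSpace ℝ (Fin N) ≃ₗᵢ[ℝ] EuclideanSpace ℝ (Fin N)) x - y‖ := rfl
      rw [← this]; exact h1
  · -- sqrt Q ≤ iSup
    have h2 : Real.sqrt Q ≤ ‖f gm - y‖ := by
      rw [show ‖f gm - y‖ = Real.sqrt (‖f gm - y‖ ^ 2) by
        rw [Real.sqrt_sq (norm_nonneg _)]]
      exact Real.sqrt_le_sqrt hQle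
    exact le_trans h2 (le_ciSup (f := fun g : G =>
      ‖(g : EuclideanSpace ℝ (Fin N) ≃ₗᵢ[ℝ] EuclideanSpace ℝ (Fin N)) x - y‖)
      ((Set.finite_range _).bddAbove) gm)
end

section
/- Let N ≥ 1, let G be a finite subgroup of the orthogonal group O(N) acting on ℝ^N, let x, y, y₀ ∈ ℝ^N satisfy min_{g∈G} ‖g·x − y‖ > 2‖y − y₀‖. Then for every t ∈ [0,1] and every η in the convex hull of the orbit G·x = {g·x : g ∈ G}, setting y_t = y₀ + t(y − y₀), one has ‖y − y₀‖ < A(x, y_t, η), where A(x,y,η) := √(‖x‖² + ‖y‖² − 2⟨y,η⟩). -/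
open Set

/-- if `min_{g∈G} ‖g·x − y‖ > 2‖y − y₀‖` then, for every `t ∈ [0,1]` and
every `η` in the convex hull of the orbit `G·x`, one has
`‖y − y₀‖ < A(x, y_t, η)` where `y_t = y₀ + t(y − y₀)` and
`A(x,y,η) = √(‖x‖² + ‖y‖² − 2⟨y,η⟩)`. -/
theorem dist_lt_A_on_segment
    (N : ℕ) (hN : 1 ≤ N)
    (G : Subgroup (EuclideanSpace ℝ (Fin N) ≃ₗᵢ[ℝ] EuclideanSpace ℝ (Fin N)))
    (hGfin : Finite G)
    (x y y₀ : EuclideanSpace ℝ (Fin N))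
    (hsep : 2 * ‖y - y₀‖ <
      ⨅ g : G, ‖(g : EuclideanSpace ℝ (Fin N) ≃ₗᵢ[ℝ] EuclideanSpace ℝ (Fin N)) x - y‖) :
    ∀ t ∈ Set.Icc (0 : ℝ) 1,
      ∀ η ∈ convexHull ℝ
        ((fun g : G => (g : EuclideanSpace ℝ (Fin N) ≃ₗᵢ[ℝ] EuclideanSpace ℝ (Fin N)) x) ''
          univ),
        ‖y - y₀‖ <
          Real.sqrt (‖x‖ ^ 2 + ‖y₀ + t • (y - y₀)‖ ^ 2 -
            2 * (inner ℝ (y₀ + t • (y - y₀)) η : ℝ)) := by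
  intro t ht η hη
  have _dummy : True := trivial
  set d : ℝ := ‖y - y₀‖ with hd
  set yt : EuclideanSpace ℝ (Fin N) := y₀ + t • (y - y₀) with hyt
  -- the set where d^2 < F η is a half-space
  have hconv : Convex ℝ {w : EuclideanSpace ℝ (Fin N) | d ^ 2 < ‖x‖ ^ 2 + ‖yt‖ ^ 2 - 2 * (inner ℝ yt w : ℝ)} := by
    have : {w : EuclideanSpace ℝ (Fin N) | d ^ 2 < ‖x‖ ^ 2 + ‖yt‖ ^ 2 - 2 * (inner ℝ yt w : ℝ)}
        = {w : EuclideanSpace ℝ (Fin N) | (2 : ℝ) * (inner ℝ yt w : ℝ) < ‖x‖ ^ 2 + ‖yt‖ ^ 2 - d ^ 2} := by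
      ext w; constructor <;> intro h <;> simp only [Set.mem_setOf_eq] at * <;> linarith
    rw [this]
    exact convex_halfSpace_lt
      ⟨fun a b => by simp [inner_add_right, mul_add],
       fun c a => by simp [inner_smul_right]; ring⟩ _
  -- vertices lie in the half-space
  have hvert : ∀ g : G,
      ((g : EuclideanSpace ℝ (Fin N) ≃ₗᵢ[ℝ] EuclideanSpace ℝ (Fin N)) x) ∈ {w : EuclideanSpace ℝ (Fin N) | d ^ 2 < ‖x‖ ^ 2 + ‖yt‖ ^ 2 - 2 * (inner ℝ yt w : ℝ)} := by
    intro g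
    have hbdd : BddBelow (Set.range fun g : G => ‖(g : EuclideanSpace ℝ (Fin N) ≃ₗᵢ[ℝ] EuclideanSpace ℝ (Fin N)) x - y‖) :=
      ⟨0, by rintro _ ⟨g, rfl⟩; positivity⟩
    have h1 : 2 * d < ‖(g : EuclideanSpace ℝ (Fin N) ≃ₗᵢ[ℝ] EuclideanSpace ℝ (Fin N)) x - y‖ := lt_of_lt_of_le hsep (ciInf_le hbdd g)
    have h2 : ‖y - yt‖ ≤ d := by
      have : y - yt = (1 - t) • (y - y₀) := by
        rw [hyt]; module
      rw [this, norm_smul]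
      have h0 : |1 - t| = 1 - t := abs_of_nonneg (by linarith [ht.2])
      rw [Real.norm_eq_abs, h0]
      nlinarith [norm_nonneg (y - y₀), ht.1]
    have h3 : d < ‖(g : EuclideanSpace ℝ (Fin N) ≃ₗᵢ[ℝ] EuclideanSpace ℝ (Fin N)) x - yt‖ := by
      have h4 := norm_sub_le_norm_sub_add_norm_sub ((g : EuclideanSpace ℝ (Fin N) ≃ₗᵢ[ℝ] EuclideanSpace ℝ (Fin N)) x) yt y
      have h5 : ‖yt - y‖ = ‖y - yt‖ := norm_sub_rev _ _
      linarith
    have hd0 : 0 ≤ d := norm_nonneg _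
    have hsq : d ^ 2 < ‖(g : EuclideanSpace ℝ (Fin N) ≃ₗᵢ[ℝ] EuclideanSpace ℝ (Fin N)) x - yt‖ ^ 2 := by nlinarith
    have hexp : ‖(g : EuclideanSpace ℝ (Fin N) ≃ₗᵢ[ℝ] EuclideanSpace ℝ (Fin N)) x - yt‖ ^ 2
        = ‖x‖ ^ 2 + ‖yt‖ ^ 2 - 2 * (inner ℝ yt ((g : EuclideanSpace ℝ (Fin N) ≃ₗᵢ[ℝ] EuclideanSpace ℝ (Fin N)) x) : ℝ) := by
      rw [norm_sub_sq_real, (g : EuclideanSpace ℝ (Fin N) ≃ₗᵢ[ℝ] EuclideanSpace ℝ (Fin N)).norm_map, real_inner_comm]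
      ring
    simp only [Set.mem_setOf_eq]
    rw [← hexp]; exact hsq
  have hsub : convexHull ℝ ((fun g : G => (g : EuclideanSpace ℝ (Fin N) ≃ₗᵢ[ℝ] EuclideanSpace ℝ (Fin N)) x) '' univ)
      ⊆ {w : EuclideanSpace ℝ (Fin N) | d ^ 2 < ‖x‖ ^ 2 + ‖yt‖ ^ 2 - 2 * (inner ℝ yt w : ℝ)} := by
    apply convexHull_min _ hconv
    rintro _ ⟨g, -, rfl⟩
    exact hvert g
  have hη' := hsub hη
  simp only [Set.mem_setOf_eq] at hη'
  calc d = Real.sqrt (d ^ 2) := (Real.sqrt_sq (norm_nonneg _)).symm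
    _ < _ := Real.sqrt_lt_sqrt (sq_nonneg d) hη'
end
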